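/- Eq. (A.39) of ASPIRE-EASE (control of the asynchronous regularized dual ascent in φ): Suppose Assumption 1 holds, the sequence (c₂^s)_{s≥0} is positive and nonincreasing, and ρ₂ ≤ 2/(L + 2c₂⁰). Let Q ⊆ {1,…,N} with |Q| = S′. Suppose that for each j ∈ Q, φ_j^{t+1} is the metric projection onto Φ of φ_j^t + ρ₂·∇_{φ_j}L̃_p(w^{t+1}, z^{t+1}, h^{t+1}, λ^{t+1}, φ^t) where L̃_p uses regularization parameters (c₁^t, c₂^t), while φ_j^{t+1} = φ_j^t for j ∉ Q; and that for every j, ⟨∇_{φ_j}L̃_p(w^t, z^t, h^t, λ^t, φ^{t−1}) − (1/ρ₂)(φ_j^t − φ_j^{t−1}), φ_j^{t+1} − φ_j^t⟩ ≤ 0, where this L̃_p uses parameters (c₁^{t−1}, c₂^{t−1}). Then for every constant a₃ > 0: L_p(w^{t+1}, z^{t+1}, h^{t+1}, λ^{t+1}, φ^{t+1}) − L_p(w^{t+1}, z^{t+1}, h^{t+1}, λ^{t+1}, φ^t) ≤ (S′L²/(2a₃))·(Σ_{j=1}^N‖w_j^{t+1} − w_j^t‖² + ‖z^{t+1} − z^t‖²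 + ‖h^{t+1} − h^t‖²) + (a₃/2 − (c₂^{t−1} − c₂^t)/2 + 1/(2ρ₂))·Σ_{j=1}^N‖φ_j^{t+1} − φ_j^t‖² + (c₂^{t−1}/2)·Σ_{j=1}^N(‖φ_j^{t+1}‖² − ‖φ_j^t‖²) + (1/(2ρ₂))·Σ_{j=1}^N‖φ_j^t − φ_j^{t−1}‖². -/
import Mathlib


open scoped RealInnerProductSpace

noncomputable section

/-- `ℝ^p` with the Euclidean inner product. -/
abbrev Vec (p : ℕ) : Type := EuclideanSpace ℝ (Fin p)

/-- The augmented Lagrangian `L_p` of the ASPIRE-EASE problem. -/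
def aLag {N m p : ℕ} (f : Fin N → Vec p → ℝ) (A : Fin m → Fin N → ℝ) (pbar κ : ℝ)
    (w : Fin N → Vec p) (z : Vec p) (h : ℝ) (lam : Fin m → ℝ) (phi : Fin N → Vec p) : ℝ :=
  h + (∑ l, lam l * ((∑ j, (pbar + A l j) * f j (w j)) - h))
    + (∑ j, ⟪phi j, z - w j⟫) + (∑ j, (κ / 2) * ‖z - w j‖ ^ 2)

/-- A record of candidate blockwise partial gradients of `L_p`. -/
structure GradOracle (N m p : ℕ) where
  gw : (Fin N → Vec p) → Vec p → ℝ → (Fin m → ℝ) → (Fin N → Vec p) → Fin N → Vec p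
  gz : (Fin N → Vec p) → Vec p → ℝ → (Fin m → ℝ) → (Fin N → Vec p) → Vec p
  gh : (Fin N → Vec p) → Vec p → ℝ → (Fin m → ℝ) → (Fin N → Vec p) → ℝ
  glam : (Fin N → Vec p) → Vec p → ℝ → (Fin m → ℝ) → (Fin N → Vec p) → Fin m → ℝ
  gphi : (Fin N → Vec p) → Vec p → ℝ → (Fin m → ℝ) → (Fin N → Vec p) → Fin N → Vec p

/-- `G` records the genuine partial gradients `∇_{w_j}L_p, ∇_z L_p, ∇_h L_p, ∇_{λ_l}L_p,
`∇_{φ_j}L_p` of the augmented Lagrangian. -/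
def IsGradOf {N m p : ℕ} (f : Fin N → Vec p → ℝ) (A : Fin m → Fin N → ℝ) (pbar κ : ℝ)
    (G : GradOracle N m p) : Prop :=
  (∀ (w : Fin N → Vec p) (z : Vec p) (h : ℝ) (lam : Fin m → ℝ) (phi : Fin N → Vec p) (j : Fin N),
    HasGradientAt (fun x => aLag f A pbar κ (Function.update w j x) z h lam phi)
      (G.gw w z h lam phi j) (w j)) ∧
  (∀ (w : Fin N → Vec p) (z : Vec p) (h : ℝ) (lam : Fin m → ℝ) (phi : Fin N → Vec p),
    HasGradientAt (fun x => aLag f A pbar κ w x h lam phi) (G.gz w z h lam phi) z) ∧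
  (∀ (w : Fin N → Vec p) (z : Vec p) (h : ℝ) (lam : Fin m → ℝ) (phi : Fin N → Vec p),
    HasGradientAt (fun x => aLag f A pbar κ w z x lam phi) (G.gh w z h lam phi) h) ∧
  (∀ (w : Fin N → Vec p) (z : Vec p) (h : ℝ) (lam : Fin m → ℝ) (phi : Fin N → Vec p) (l : Fin m),
    HasGradientAt (fun x => aLag f A pbar κ w z h (Function.update lam l x) phi)
      (G.glam w z h lam phi l) (lam l)) ∧
  (∀ (w : Fin N → Vec p) (z : Vec p) (h : ℝ) (lam : Fin m → ℝ) (phi : Fin N → Vec p) (j : Fin N),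
    HasGradientAt (fun x => aLag f A pbar κ w z h lam (Function.update phi j x))
      (G.gphi w z h lam phi j) (phi j))

/-- Assumption 1: the gradient of `L_p` is `L`-Lipschitz with respect to the ℓ²-product
norm on `E = (ℝ^p)^N × ℝ^p × ℝ × ℝ^m × (ℝ^p)^N` (stated in squared form). -/
def LipGrad {N m p : ℕ} (L : ℝ) (G : GradOracle N m p) : Prop :=
  ∀ (w : Fin N → Vec p) (z : Vec p) (h : ℝ) (lam : Fin m → ℝ) (phi : Fin N → Vec p)
    (w' : Fin N → Vec p) (z' : Vec p) (h' : ℝ) (lam' : Fin m → ℝ) (phi' : Fin N → Vec p),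
    (∑ j, ‖G.gw w z h lam phi j - G.gw w' z' h' lam' phi' j‖ ^ 2)
      + ‖G.gz w z h lam phi - G.gz w' z' h' lam' phi'‖ ^ 2
      + ‖G.gh w z h lam phi - G.gh w' z' h' lam' phi'‖ ^ 2
      + (∑ l, ‖G.glam w z h lam phi l - G.glam w' z' h' lam' phi' l‖ ^ 2)
      + (∑ j, ‖G.gphi w z h lam phi j - G.gphi w' z' h' lam' phi' j‖ ^ 2)
    ≤ L ^ 2 * ((∑ j, ‖w j - w' j‖ ^ 2) + ‖z - z'‖ ^ 2 + ‖h - h'‖ ^ 2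
      + (∑ l, ‖lam l - lam' l‖ ^ 2) + (∑ j, ‖phi j - phi' j‖ ^ 2))

/-- `y` is the metric projection of `x` onto the set `C`. -/
def IsProjection {V : Type*} [NormedAddCommGroup V] [InnerProductSpace ℝ V]
    (C : Set V) (x y : V) : Prop :=
  y ∈ C ∧ ∀ u ∈ C, ⟪x - y, u - y⟫ ≤ 0


/- ### Auxiliary lemmas -/

lemma aspire_perstep {V : Type*} [NormedAddCommGroup V] [InnerProductSpace ℝ V]
    (φm φ0 φ1 g0 g1 : V) (c ct ρi a3 K : ℝ)
    (ha3 : 0 < a3) (hc : 0 < c) (hct : 0 < ct) (hcρ : c ≤ ρi)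
    (hI : ⟪(g0 - c • φm) - ρi • (φ0 - φm), φ1 - φ0⟫ ≤ 0)
    (hgd : ‖g1 - g0‖ ^ 2 ≤ K) :
    ⟪φ1 - φ0, g1⟫ ≤ (1 / (2 * a3)) * K
      + (a3 / 2 - (c - ct) / 2 + ρi / 2) * ‖φ1 - φ0‖ ^ 2
      + (c / 2) * (‖φ1‖ ^ 2 - ‖φ0‖ ^ 2) + (ρi / 2) * ‖φ0 - φm‖ ^ 2 := by
  rw [inner_sub_left, inner_sub_left, real_inner_smul_left, real_inner_smul_left] at hI
  have e1 : ⟪g0, φ1 - φ0⟫ = ⟪φ1 - φ0, g0⟫ := real_inner_comm _ _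
  have e2 : ⟪φ1 - φ0, g1⟫ = ⟪φ1 - φ0, g1 - g0⟫ + ⟪φ1 - φ0, g0⟫ := by
    rw [inner_sub_right]; abel
  have e3 : ⟪φm, φ1 - φ0⟫ = ⟪φ0, φ1 - φ0⟫ - ⟪φ0 - φm, φ1 - φ0⟫ := by
    rw [← inner_sub_left, sub_sub_cancel]
  have e4 : ⟪φ0, φ1 - φ0⟫ = (‖φ1‖ ^ 2 - ‖φ0‖ ^ 2 - ‖φ1 - φ0‖ ^ 2) / 2 := by
    have hn := norm_add_sq_real φ0 (φ1 - φ0)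
    have h' : φ0 + (φ1 - φ0) = φ1 := by abel
    rw [h'] at hn
    linarith
  have e5 : ⟪φ0 - φm, φ1 - φ0⟫ ≤ (‖φ0 - φm‖ ^ 2 + ‖φ1 - φ0‖ ^ 2) / 2 := by
    nlinarith [real_inner_le_norm (φ0 - φm) (φ1 - φ0), sq_nonneg (‖φ0 - φm‖ - ‖φ1 - φ0‖)]
  have e6 : ⟪φ1 - φ0, g1 - g0⟫ ≤ (a3 / 2) * ‖φ1 - φ0‖ ^ 2 + (1 / (2 * a3)) * ‖g1 - g0‖ ^ 2 := by
    have h1 := real_inner_le_norm (φ1 - φ0) (g1 - g0)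
    have h2 : (0:ℝ) ≤ (1 / (2 * a3)) * (a3 * ‖φ1 - φ0‖ - ‖g1 - g0‖) ^ 2 := by positivity
    have h3 : (1 / (2 * a3)) * (a3 * ‖φ1 - φ0‖ - ‖g1 - g0‖) ^ 2
        = (a3 / 2) * ‖φ1 - φ0‖ ^ 2 + (1 / (2 * a3)) * ‖g1 - g0‖ ^ 2
          - ‖φ1 - φ0‖ * ‖g1 - g0‖ := by
      field_simp
      ring
    linarith
  have ce3 : c * ⟪φm, φ1 - φ0⟫ = c * ⟪φ0, φ1 - φ0⟫ - c * ⟪φ0 - φm, φ1 - φ0⟫ := by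
    rw [e3]; ring
  have ce4 : c * ⟪φ0, φ1 - φ0⟫ = c * ((‖φ1‖ ^ 2 - ‖φ0‖ ^ 2 - ‖φ1 - φ0‖ ^ 2) / 2) := by
    rw [e4]
  have αe5 : (ρi - c) * ⟪φ0 - φm, φ1 - φ0⟫
      ≤ (ρi - c) * ((‖φ0 - φm‖ ^ 2 + ‖φ1 - φ0‖ ^ 2) / 2) :=
    mul_le_mul_of_nonneg_left e5 (by linarith)
  have hgd' : (1 / (2 * a3)) * ‖g1 - g0‖ ^ 2 ≤ (1 / (2 * a3)) * K :=
    mul_le_mul_of_nonneg_left hgd (by positivity)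
  have s1 : (0:ℝ) ≤ c * ‖φ0 - φm‖ ^ 2 := mul_nonneg hc.le (sq_nonneg _)
  have s2 : (0:ℝ) ≤ (c + ct) * ‖φ1 - φ0‖ ^ 2 :=
    mul_nonneg (by linarith) (sq_nonneg _)
  linarith [hI, e1, e2, ce3, ce4, αe5, e6, hgd', s1, s2]

lemma aLag_update_phi {N m p : ℕ} (f : Fin N → Vec p → ℝ) (A : Fin m → Fin N → ℝ)
    (pbar κ : ℝ) (w : Fin N → Vec p) (z : Vec p) (h : ℝ) (lam : Fin m → ℝ)
    (phi : Fin N → Vec p) (j : Fin N) (x : Vec p) :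
    aLag f A pbar κ w z h lam (Function.update phi j x)
      = ⟪x, z - w j⟫ + aLag f A pbar κ w z h lam (Function.update phi j 0) := by
  have hs : ∀ y : Vec p, (∑ i, ⟪Function.update phi j y i, z - w i⟫)
      = ⟪y, z - w j⟫ + ∑ i ∈ Finset.univ \ {j}, ⟪phi i, z - w i⟫ := by
    intro y
    have : (fun i => ⟪Function.update phi j y i, z - w i⟫)
        = Function.update (fun i => ⟪phi i, z - w i⟫) j ⟪y, z - w j⟫ := by
      funext i
      rcases eq_or_ne i j with rfl | hij
      · simp
      · simp [Function.update_of_ne hij]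
    rw [this, Finset.sum_update_of_mem (Finset.mem_univ j)]
  unfold aLag
  rw [hs x, hs 0]
  simp
  ring

lemma hasGradientAt_inner_add_const {p : ℕ} (v x : Vec p) (C : ℝ) :
    HasGradientAt (fun y : Vec p => ⟪y, v⟫ + C) v x := by
  have h1 : HasFDerivAt (fun y : Vec p => (InnerProductSpace.toDual ℝ (Vec p) v) y + C)
      (InnerProductSpace.toDual ℝ (Vec p) v) x :=
    (InnerProductSpace.toDual ℝ (Vec p) v).hasFDerivAt.add_const C
  have h2 : (fun y : Vec p => ⟪y, v⟫ + C)
      = fun y : Vec p => (InnerProductSpace.toDual ℝ (Vec p) v) y + C := by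
    funext y; rw [InnerProductSpace.toDual_apply_apply, real_inner_comm]
  rw [hasGradientAt_iff_hasFDerivAt, h2]
  exact h1

lemma gphi_eq {N m p : ℕ} {f : Fin N → Vec p → ℝ} {A : Fin m → Fin N → ℝ} {pbar κ : ℝ}
    {G : GradOracle N m p} (hgrad : IsGradOf f A pbar κ G)
    (w : Fin N → Vec p) (z : Vec p) (h : ℝ) (lam : Fin m → ℝ) (phi : Fin N → Vec p)
    (j : Fin N) : G.gphi w z h lam phi j = z - w j := by
  refine (hgrad.2.2.2.2 w z h lam phi j).unique ?_
  have heq : (fun x => aLag f A pbar κ w z h lam (Function.update phi j x))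
      = fun x => ⟪x, z - w j⟫ + aLag f A pbar κ w z h lam (Function.update phi j 0) :=
    funext fun x => aLag_update_phi f A pbar κ w z h lam phi j x
  rw [heq]
  exact hasGradientAt_inner_add_const (z - w j) (phi j) _

/-- **Eq. (A.39) of ASPIRE-EASE**: control of the asynchronous regularized dual
ascent in `φ`. -/
theorem aspire_eq_A39
    {N m p : ℕ} (f : Fin N → Vec p → ℝ) (A : Fin m → Fin N → ℝ) (pbar κ L : ℝ)
    (hκ : 0 < κ) (hL : 0 ≤ L)
    (G : GradOracle N m p) (hgrad : IsGradOf f A pbar κ G) (hlip : LipGrad L G)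
    (Phiset : Set (Vec p))
    (hPne : Phiset.Nonempty) (hPcl : IsClosed Phiset) (hPco : Convex ℝ Phiset)
    (w : ℕ → Fin N → Vec p) (z : ℕ → Vec p) (h : ℕ → ℝ)
    (lam : ℕ → Fin m → ℝ) (phi : ℕ → Fin N → Vec p)
    (c2 : ℕ → ℝ) (hc2pos : ∀ s, 0 < c2 s) (hc2anti : Antitone c2)
    (ρ2 : ℝ) (hρ2 : 0 < ρ2) (hρ2le : ρ2 ≤ 2 / (L + 2 * c2 0))
    (t : ℕ) (ht : 1 ≤ t)
    (Q : Finset (Fin N)) (S' : ℕ) (hS' : Q.card = S')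
    (hupdPhi : ∀ j ∈ Q, IsProjection Phiset
      (phi t j + ρ2 • (G.gphi (w (t + 1)) (z (t + 1)) (h (t + 1)) (lam (t + 1)) (phi t) j
        - c2 t • phi t j)) (phi (t + 1) j))
    (hidlePhi : ∀ j ∉ Q, phi (t + 1) j = phi t j)
    (hineqPhi : ∀ j, ⟪(G.gphi (w t) (z t) (h t) (lam t) (phi (t - 1)) j
        - c2 (t - 1) • phi (t - 1) j) - (1 / ρ2) • (phi t j - phi (t - 1) j),
        phi (t + 1) j - phi t j⟫ ≤ 0) :
    ∀ a3 : ℝ, 0 < a3 →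
      aLag f A pbar κ (w (t + 1)) (z (t + 1)) (h (t + 1)) (lam (t + 1)) (phi (t + 1))
          - aLag f A pbar κ (w (t + 1)) (z (t + 1)) (h (t + 1)) (lam (t + 1)) (phi t)
        ≤ ((S' : ℝ) * L ^ 2 / (2 * a3)) *
            ((∑ j, ‖w (t + 1) j - w t j‖ ^ 2) + ‖z (t + 1) - z t‖ ^ 2 + ‖h (t + 1) - h t‖ ^ 2)
          + (a3 / 2 - (c2 (t - 1) - c2 t) / 2 + 1 / (2 * ρ2)) *
            (∑ j, ‖phi (t + 1) j - phi t j‖ ^ 2)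
          + (c2 (t - 1) / 2) * (∑ j, (‖phi (t + 1) j‖ ^ 2 - ‖phi t j‖ ^ 2))
          + (1 / (2 * ρ2)) * (∑ j, ‖phi t j - phi (t - 1) j‖ ^ 2) := by
  intro a3 ha3
  have hgphi : ∀ (w' : Fin N → Vec p) (z' : Vec p) (h' : ℝ) (lam' : Fin m → ℝ)
      (phi' : Fin N → Vec p) (j : Fin N), G.gphi w' z' h' lam' phi' j = z' - w' j :=
    fun w' z' h' lam' phi' j => gphi_eq hgrad w' z' h' lam' phi' j
  set D := (∑ j, ‖w (t + 1) j - w t j‖ ^ 2) + ‖z (t + 1) - z t‖ ^ 2 + ‖h (t + 1) - h t‖ ^ 2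
    with hDdef
  have hD0 : 0 ≤ D := by positivity
  -- Lipschitz bound for each φ-block gradient difference
  have hgd : ∀ j : Fin N,
      ‖(z (t + 1) - w (t + 1) j) - (z t - w t j)‖ ^ 2 ≤ L ^ 2 * D := by
    intro j
    have H := hlip (w (t + 1)) (z (t + 1)) (h (t + 1)) (lam (t + 1)) (phi t)
      (w t) (z t) (h (t + 1)) (lam (t + 1)) (phi t)
    simp only [hgphi, sub_self, norm_zero, ne_eq, OfNat.ofNat_ne_zero, not_false_eq_true,
      zero_pow, Finset.sum_const_zero, add_zero] at H
    have h1 : ‖(z (t + 1) - w (t + 1) j) - (z t - w t j)‖ ^ 2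
        ≤ ∑ i, ‖(z (t + 1) - w (t + 1) i) - (z t - w t i)‖ ^ 2 :=
      Finset.single_le_sum (f := fun i => ‖(z (t + 1) - w (t + 1) i) - (z t - w t i)‖ ^ 2)
        (fun i _ => sq_nonneg _) (Finset.mem_univ j)
    have p1 : (0:ℝ) ≤ ∑ i, ‖G.gw (w (t+1)) (z (t+1)) (h (t+1)) (lam (t+1)) (phi t) i
        - G.gw (w t) (z t) (h (t+1)) (lam (t+1)) (phi t) i‖ ^ 2 :=
      Finset.sum_nonneg fun i _ => sq_nonneg _
    have p2 : (0:ℝ) ≤ ‖G.gz (w (t+1)) (z (t+1)) (h (t+1)) (lam (t+1)) (phi t)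
        - G.gz (w t) (z t) (h (t+1)) (lam (t+1)) (phi t)‖ ^ 2 := sq_nonneg _
    have p3 : (0:ℝ) ≤ ‖G.gh (w (t+1)) (z (t+1)) (h (t+1)) (lam (t+1)) (phi t)
        - G.gh (w t) (z t) (h (t+1)) (lam (t+1)) (phi t)‖ ^ 2 := sq_nonneg _
    have p4 : (0:ℝ) ≤ ∑ l, ‖G.glam (w (t+1)) (z (t+1)) (h (t+1)) (lam (t+1)) (phi t) l
        - G.glam (w t) (z t) (h (t+1)) (lam (t+1)) (phi t) l‖ ^ 2 :=
      Finset.sum_nonneg fun l _ => sq_nonneg _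
    have p5 : (0:ℝ) ≤ L ^ 2 * ‖h (t + 1) - h t‖ ^ 2 := by positivity
    have hstep : L ^ 2 * ((∑ j, ‖w (t + 1) j - w t j‖ ^ 2) + ‖z (t + 1) - z t‖ ^ 2)
        ≤ L ^ 2 * D := by
      rw [hDdef]
      nlinarith [p5]
    linarith [H, h1, p1, p2, p3, p4, hstep]
  have hα : c2 (t - 1) ≤ 1 / ρ2 := by
    have hX : (0:ℝ) < L + 2 * c2 0 := by nlinarith [hc2pos 0]
    have h2 : ρ2 * (L + 2 * c2 0) ≤ 2 := (le_div_iff₀ hX).1 hρ2le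
    rw [le_div_iff₀ hρ2]
    nlinarith [mul_le_mul_of_nonneg_right (hc2anti (Nat.zero_le (t - 1))) hρ2.le]
  -- per-coordinate bound
  have key : ∀ j : Fin N,
      ⟪phi (t + 1) j - phi t j, z (t + 1) - w (t + 1) j⟫
        ≤ (if j ∈ Q then (1 / (2 * a3)) * (L ^ 2 * D) else 0)
          + ((a3 / 2 - (c2 (t - 1) - c2 t) / 2 + 1 / (2 * ρ2)) * ‖phi (t + 1) j - phi t j‖ ^ 2
            + (c2 (t - 1) / 2) * (‖phi (t + 1) j‖ ^ 2 - ‖phi t j‖ ^ 2)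
            + (1 / (2 * ρ2)) * ‖phi t j - phi (t - 1) j‖ ^ 2) := by
    intro j
    by_cases hj : j ∈ Q
    · simp only [hj, if_true]
      have hI := hineqPhi j
      rw [hgphi] at hI
      have hb := aspire_perstep (phi (t - 1) j) (phi t j) (phi (t + 1) j)
        (z t - w t j) (z (t + 1) - w (t + 1) j)
        (c2 (t - 1)) (c2 t) (1 / ρ2) a3 (L ^ 2 * D)
        ha3 (hc2pos (t - 1)) (hc2pos t) hα hI (hgd j)
      have h12 : 1 / ρ2 / 2 = 1 / (2 * ρ2) := by ring
      rw [h12] at hb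
      linarith [hb]
    · rw [hidlePhi j hj]
      simp only [hj, if_false, sub_self, inner_zero_left, norm_zero]
      have h0 : (0:ℝ) ≤ (1 / (2 * ρ2)) * ‖phi t j - phi (t - 1) j‖ ^ 2 := by positivity
      have h1 : ((0:ℝ)) ^ 2 = 0 := by norm_num
      simp only [h1, mul_zero, sub_self, zero_add, add_zero, zero_sub, mul_neg]
      nlinarith [h0]
  -- sum over coordinates
  have hdiff : aLag f A pbar κ (w (t + 1)) (z (t + 1)) (h (t + 1)) (lam (t + 1)) (phi (t + 1))
      - aLag f A pbar κ (w (t + 1)) (z (t + 1)) (h (t + 1)) (lam (t + 1)) (phi t)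
      = ∑ j, ⟪phi (t + 1) j - phi t j, z (t + 1) - w (t + 1) j⟫ := by
    unfold aLag
    rw [Finset.sum_congr rfl
      (fun j _ => inner_sub_left (phi (t + 1) j) (phi t j) (z (t + 1) - w (t + 1) j)),
      Finset.sum_sub_distrib]
    ring
  rw [hdiff]
  calc ∑ j, ⟪phi (t + 1) j - phi t j, z (t + 1) - w (t + 1) j⟫
      ≤ ∑ j, ((if j ∈ Q then (1 / (2 * a3)) * (L ^ 2 * D) else 0)
          + ((a3 / 2 - (c2 (t - 1) - c2 t) / 2 + 1 / (2 * ρ2)) * ‖phi (t + 1) j - phi t j‖ ^ 2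
            + (c2 (t - 1) / 2) * (‖phi (t + 1) j‖ ^ 2 - ‖phi t j‖ ^ 2)
            + (1 / (2 * ρ2)) * ‖phi t j - phi (t - 1) j‖ ^ 2)) :=
      Finset.sum_le_sum fun j _ => key j
    _ = (∑ j, if j ∈ Q then (1 / (2 * a3)) * (L ^ 2 * D) else 0)
          + ∑ j, ((a3 / 2 - (c2 (t - 1) - c2 t) / 2 + 1 / (2 * ρ2))
              * ‖phi (t + 1) j - phi t j‖ ^ 2
            + (c2 (t - 1) / 2) * (‖phi (t + 1) j‖ ^ 2 - ‖phi t j‖ ^ 2)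
            + (1 / (2 * ρ2)) * ‖phi t j - phi (t - 1) j‖ ^ 2) := Finset.sum_add_distrib
    _ ≤ _ := by
      rw [Finset.sum_ite_mem, Finset.univ_inter, Finset.sum_const, hS']
      rw [Finset.sum_add_distrib, Finset.sum_add_distrib,
        ← Finset.mul_sum, ← Finset.mul_sum, ← Finset.mul_sum]
      rw [nsmul_eq_mul]
      apply le_of_eq
      ring
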